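/- Let n and m be positive integers, let F_r be an n×n real matrix with a := μ∞(F_r) < 0, let ε ≥ 0, and let S be an m×n real matrix whose every row has absolute row sum at most ε (i.e. Σ_j |S_{ij}| ≤ ε for every i). Then the (n+m)×(n+m) block matrix F = [[F_r, 0], [a·S, a·I_m]] satisfies μ∞(F) ≤ a·(1 − ε) = μ∞(F_r)·(1 − ε). -/

import Mathlib

open Matrix Finset

/-- The ∞-norm matrix measure: `μ∞(M) = max_i ( M i i + ∑_{j ≠ i} |M i j| )`. -/
noncomputable def muInfty {k : Type*} [Fintype k] [DecidableEq k]
    (M : Matrix k k ℝ) : ℝ :=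
  ⨆ i, (M i i + ∑ j ∈ Finset.univ.erase i, |M i j|)

lemma row_eq' {k : Type*} [Fintype k] [DecidableEq k] (M : Matrix k k ℝ) (i : k) :
    M i i + ∑ j ∈ Finset.univ.erase i, |M i j| = M i i - |M i i| + ∑ j, |M i j| := by
  rw [Finset.sum_erase_eq_sub (Finset.mem_univ i)]; ring

theorem stmt7 (n m : ℕ) (hn : 0 < n) (hm : 0 < m)
    (Fr : Matrix (Fin n) (Fin n) ℝ) (a : ℝ) (ha : a = muInfty Fr) (haneg : a < 0)
    (ε : ℝ) (hε : 0 ≤ ε)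
    (S : Matrix (Fin m) (Fin n) ℝ) (hS : ∀ i, ∑ j, |S i j| ≤ ε) :
    muInfty (Matrix.fromBlocks Fr 0 (a • S) (a • (1 : Matrix (Fin m) (Fin m) ℝ))) ≤
      a * (1 - ε) ∧ a * (1 - ε) = muInfty Fr * (1 - ε) := by
  refine ⟨?_, by rw [ha]⟩
  have haa : a ≤ a * (1 - ε) := by nlinarith
  haveI : NeZero n := ⟨hn.ne'⟩
  haveI : NeZero m := ⟨hm.ne'⟩
  apply ciSup_le
  intro i
  rcases i with i | i
  · have hrow : Fr i i + ∑ j ∈ Finset.univ.erase i, |Fr i j| ≤ a := by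
      rw [ha, muInfty]
      exact le_ciSup (f := fun i => Fr i i + ∑ j ∈ Finset.univ.erase i, |Fr i j|) (Set.Finite.bddAbove (Set.finite_range _)) i
    refine le_trans ?_ (le_trans hrow haa)
    rw [row_eq', row_eq', Fintype.sum_sum_type]
    simp [Matrix.fromBlocks]
  · rw [row_eq', Fintype.sum_sum_type]
    have h1 : ∑ j, |Matrix.fromBlocks Fr 0 (a • S) (a • (1 : Matrix (Fin m) (Fin m) ℝ)) (Sum.inr i) (Sum.inl j)| = |a| * ∑ j, |S i j| := by
      simp [Matrix.fromBlocks, abs_mul, Finset.mul_sum]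
    have h2 : ∑ j, |Matrix.fromBlocks Fr 0 (a • S) (a • (1 : Matrix (Fin m) (Fin m) ℝ)) (Sum.inr i) (Sum.inr j)| = |a| := by
      simp [Matrix.fromBlocks, Matrix.one_apply, apply_ite abs, abs_mul]
    rw [h1, h2]
    have hd : Matrix.fromBlocks Fr 0 (a • S) (a • (1 : Matrix (Fin m) (Fin m) ℝ)) (Sum.inr i) (Sum.inr i) = a := by
      simp [Matrix.fromBlocks]
    rw [hd, abs_of_neg haneg]
    have hs := hS i
    have hsn : (0:ℝ) ≤ ∑ j, |S i j| := Finset.sum_nonneg fun j _ => abs_nonneg _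
    nlinarith
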